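/- arXiv:1007.0683 — 8 statements merged into one kernel-verified Lean document; each statement's English description precedes it below -/
import Mathlib

section
/- If the system is feasible, then there exist real numbers f_X^i (for X ∈ S and 1 ≤ i ≤ τ_X) such that: (1) q*_X ≤ Σ_{i=1}^{τ_X} f_X^i r_X^i for every X ∈ S; (2) 0 ≤ f_X^i ≤ T/τ_X for every X ∈ S and 1 ≤ i ≤ τ_X; and (3) Σ_{X∈S} Σ_{i=1}^{τ_X} f_X^i ≤ T. -/
/-- The number of time slots in the `p`-th period of task `X` (the interval
`[p·τ_X, (p+1)·τ_X)`) at which the schedule `η` executes `X`. -/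
def execCount {S : Type*} [DecidableEq S] (τ : S → ℕ) (η : ℕ → Option S)
    (X : S) (p : ℕ) : ℕ :=
  ((Finset.Ico (p * τ X) ((p + 1) * τ X)).filter (fun t => η t = some X)).card

/-- The reward obtained by task `X` in the `k`-th frame (slots `[kT, (k+1)T)`):
the sum over the `T/τ_X` periods of `X` contained in that frame of
`r_X^1 + ⋯ + r_X^n`, where `n` is the number of executions in that period. -/
def frameReward {S : Type*} [DecidableEq S] (τ : S → ℕ) (T : ℕ) (r : S → ℕ → ℝ)
    (η : ℕ → Option S) (X : S) (k : ℕ) : ℝ :=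
  ∑ p ∈ Finset.Ico (k * (T / τ X)) ((k + 1) * (T / τ X)),
    ∑ i ∈ Finset.Icc 1 (execCount τ η X p), r X i

/-- The long-term average reward per frame of task `X` under schedule `η`. -/
noncomputable def avgReward {S : Type*} [DecidableEq S] (τ : S → ℕ) (T : ℕ)
    (r : S → ℕ → ℝ) (η : ℕ → Option S) (X : S) : ℝ :=
  Filter.liminf
    (fun k : ℕ => (∑ j ∈ Finset.range k, frameReward τ T r η X j) / (k : ℝ))
    Filter.atTop

private def cnt {S : Type*} [DecidableEq S] (τ : S → ℕ) (T : ℕ) (η : ℕ → Option S)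
    (X : S) (i k : ℕ) : ℕ :=
  ((Finset.Ico (k * (T / τ X)) ((k + 1) * (T / τ X))).filter
    (fun p => i ≤ execCount τ η X p)).card

private lemma execCount_le {S : Type*} [DecidableEq S] (τ : S → ℕ) (η : ℕ → Option S)
    (X : S) (p : ℕ) : execCount τ η X p ≤ τ X := by
  calc execCount τ η X p ≤ (Finset.Ico (p * τ X) ((p + 1) * τ X)).card :=
        Finset.card_filter_le _ _
    _ = τ X := by rw [Nat.card_Ico, Nat.succ_mul, Nat.add_sub_cancel_left]

private lemma cnt_le {S : Type*} [DecidableEq S] (τ : S → ℕ) (T : ℕ) (η : ℕ → Option S)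
    (X : S) (i k : ℕ) : cnt τ T η X i k ≤ T / τ X := by
  calc cnt τ T η X i k ≤ (Finset.Ico (k * (T / τ X)) ((k + 1) * (T / τ X))).card :=
        Finset.card_filter_le _ _
    _ = T / τ X := by rw [Nat.card_Ico, Nat.succ_mul, Nat.add_sub_cancel_left]

private lemma filter_Ico_mul_eq_biUnion (P : ℕ → Prop) [DecidablePred P] (τ a b : ℕ)
    (hτ : 0 < τ) :
    ((Finset.Ico (a * τ) (b * τ)).filter P) =
      (Finset.Ico a b).biUnion (fun p => (Finset.Ico (p * τ) ((p + 1) * τ)).filter P) := by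
  ext t
  simp only [Finset.mem_biUnion, Finset.mem_filter, Finset.mem_Ico]
  constructor
  · rintro ⟨⟨h1, h2⟩, hP⟩
    refine ⟨t / τ, ⟨(Nat.le_div_iff_mul_le hτ).2 h1, (Nat.div_lt_iff_lt_mul hτ).2 h2⟩,
      ⟨Nat.div_mul_le_self t τ, ?_⟩, hP⟩
    calc t = τ * (t / τ) + t % τ := (Nat.div_add_mod t τ).symm
      _ < τ * (t / τ) + τ := Nat.add_lt_add_left (Nat.mod_lt t hτ) _
      _ = (t / τ + 1) * τ := by ring
  · rintro ⟨p, ⟨hap, hpb⟩, ⟨h1, h2⟩, hP⟩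
    refine ⟨⟨le_trans (Nat.mul_le_mul_right τ hap) h1,
      lt_of_lt_of_le h2 (Nat.mul_le_mul_right τ hpb)⟩, hP⟩

private lemma sum_card_filter (P : ℕ → Prop) [DecidablePred P] (τ a b : ℕ) (hτ : 0 < τ) :
    ∑ p ∈ Finset.Ico a b, ((Finset.Ico (p * τ) ((p + 1) * τ)).filter P).card
      = ((Finset.Ico (a * τ) (b * τ)).filter P).card := by
  rw [filter_Ico_mul_eq_biUnion P τ a b hτ]
  rw [Finset.card_biUnion]
  intro p _ q _ hpq
  apply Finset.disjoint_filter_filter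
  rw [Finset.disjoint_left]
  intro t h1 h2
  simp only [Finset.mem_Ico] at h1 h2
  rcases (Ne.lt_or_gt hpq) with h | h
  · exact absurd h2.1 (by
      exact fun hc => lt_irrefl t (lt_of_lt_of_le h1.2 (le_trans (Nat.mul_le_mul_right τ h) hc)))
  · exact absurd h1.1 (by
      exact fun hc => lt_irrefl t (lt_of_lt_of_le h2.2 (le_trans (Nat.mul_le_mul_right τ h) hc)))

private lemma frameReward_eq {S : Type*} [DecidableEq S] (τ : S → ℕ) (T : ℕ)
    (r : S → ℕ → ℝ) (η : ℕ → Option S) (X : S) (k : ℕ) :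
    frameReward τ T r η X k
      = ∑ i ∈ Finset.Icc 1 (τ X), (cnt τ T η X i k : ℝ) * r X i := by
  unfold frameReward
  have h1 : ∀ p, ∑ i ∈ Finset.Icc 1 (execCount τ η X p), r X i
      = ∑ i ∈ Finset.Icc 1 (τ X), if i ≤ execCount τ η X p then r X i else 0 := by
    intro p
    rw [← Finset.sum_filter]
    apply Finset.sum_congr _ (fun _ _ => rfl)
    ext i
    simp only [Finset.mem_filter, Finset.mem_Icc]
    have := execCount_le τ η X p
    omega
  simp_rw [h1]
  rw [Finset.sum_comm]
  refine Finset.sum_congr rfl fun i _ => ?_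
  rw [← Finset.sum_filter, Finset.sum_const, nsmul_eq_mul]
  rfl

private lemma sum_cnt_eq {S : Type*} [DecidableEq S] (τ : S → ℕ) (T : ℕ)
    (η : ℕ → Option S) (X : S) (k : ℕ) (hτX : 0 < τ X) (hdvd : τ X ∣ T) :
    ∑ i ∈ Finset.Icc 1 (τ X), cnt τ T η X i k
      = ((Finset.Ico (k * T) ((k + 1) * T)).filter (fun t => η t = some X)).card := by
  have hcard : ∀ (s : Finset ℕ) (p : ℕ → Prop) (hp : DecidablePred p),
      (s.filter p).card = ∑ a ∈ s, if p a then 1 else 0 := by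
    intro s p hp
    simpa using (Finset.natCast_card_filter (α := ℕ) p s)
  have h2 : ∀ p, ∑ i ∈ Finset.Icc 1 (τ X), (if i ≤ execCount τ η X p then 1 else 0)
      = execCount τ η X p := by
    intro p
    rw [← hcard _ _ _]
    have he : (Finset.Icc 1 (τ X)).filter (fun i => i ≤ execCount τ η X p)
        = Finset.Icc 1 (execCount τ η X p) := by
      ext i
      simp only [Finset.mem_filter, Finset.mem_Icc]
      have := execCount_le τ η X p
      omega
    rw [he, Nat.card_Icc]
    omega
  have step1 : ∑ i ∈ Finset.Icc 1 (τ X), cnt τ T η X i k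
      = ∑ p ∈ Finset.Ico (k * (T / τ X)) ((k + 1) * (T / τ X)), execCount τ η X p := by
    unfold cnt
    simp_rw [hcard _ _ _]
    rw [Finset.sum_comm]
    exact Finset.sum_congr rfl fun p _ => h2 p
  have step2 : ∑ p ∈ Finset.Ico (k * (T / τ X)) ((k + 1) * (T / τ X)), execCount τ η X p
      = ((Finset.Ico (k * (T / τ X) * τ X) ((k + 1) * (T / τ X) * τ X)).filter
          (fun t => η t = some X)).card := by
    unfold execCount
    exact sum_card_filter _ (τ X) _ _ hτX
  have e : ∀ n : ℕ, n * (T / τ X) * τ X = n * T := fun n => by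
    rw [mul_assoc, Nat.div_mul_cancel hdvd]
  rw [step1, step2, e k, e (k + 1)]

private lemma total_cnt_le {S : Type*} [Fintype S] [DecidableEq S] (τ : S → ℕ) (T : ℕ)
    (η : ℕ → Option S) (k : ℕ) (hτ : ∀ X, 0 < τ X) (hdvd : ∀ X, τ X ∣ T) :
    ∑ X : S, ∑ i ∈ Finset.Icc 1 (τ X), cnt τ T η X i k ≤ T := by
  have h1 : ∑ X : S, ∑ i ∈ Finset.Icc 1 (τ X), cnt τ T η X i k
      = ∑ X : S, ((Finset.Ico (k * T) ((k + 1) * T)).filter (fun t => η t = some X)).card :=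
    Finset.sum_congr rfl fun X _ => sum_cnt_eq τ T η X k (hτ X) (hdvd X)
  rw [h1, ← Finset.card_biUnion]
  · calc (Finset.univ.biUnion fun X : S =>
          (Finset.Ico (k * T) ((k + 1) * T)).filter (fun t => η t = some X)).card
        ≤ (Finset.Ico (k * T) ((k + 1) * T)).card :=
          Finset.card_le_card (Finset.biUnion_subset.2 fun X _ => Finset.filter_subset _ _)
      _ = T := by rw [Nat.card_Ico, Nat.succ_mul, Nat.add_sub_cancel_left]
  · intro X _ Y _ hXY
    rw [Function.onFun, Finset.disjoint_left]
    intro t h1 h2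
    simp only [Finset.mem_filter] at h1 h2
    exact hXY (Option.some_injective _ (h1.2.symm.trans h2.2))

/-- Lemma 1, necessity.  If the system is feasible, then
there exist reals `f_X^i` satisfying the three conditions. -/
theorem feasible_implies_lp
    {S : Type*} [Fintype S] [Nonempty S] [DecidableEq S]
    (τ : S → ℕ) (hτ : ∀ X, 0 < τ X)
    (T : ℕ) (hT : T = Finset.univ.lcm τ)
    (r : S → ℕ → ℝ)
    (hr_nonneg : ∀ X, ∀ i ∈ Finset.Icc 1 (τ X), 0 ≤ r X i)
    (hr_anti : ∀ X, ∀ i, 1 ≤ i → i + 1 ≤ τ X → r X (i + 1) ≤ r X i)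
    (qstar : S → ℝ) (hqstar : ∀ X, 0 < qstar X)
    (hfeasible : ∃ η : ℕ → Option S, ∀ X, qstar X ≤ avgReward τ T r η X) :
    ∃ f : S → ℕ → ℝ,
      (∀ X, qstar X ≤ ∑ i ∈ Finset.Icc 1 (τ X), f X i * r X i) ∧
      (∀ X, ∀ i ∈ Finset.Icc 1 (τ X),
        0 ≤ f X i ∧ f X i ≤ (T : ℝ) / (τ X : ℝ)) ∧
      (∑ X : S, ∑ i ∈ Finset.Icc 1 (τ X), f X i ≤ (T : ℝ)) := by
  obtain ⟨η, hη⟩ := hfeasible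
  have hdvd : ∀ X, τ X ∣ T := fun X => hT ▸ Finset.dvd_lcm (Finset.mem_univ X)
  set U : Ultrafilter ℕ := Ultrafilter.of Filter.atTop with hUdef
  have hUle : (U : Filter ℕ) ≤ Filter.atTop := Ultrafilter.of_le _
  set a : S → ℕ → ℕ → ℝ :=
    fun X i K => (∑ j ∈ Finset.range K, (cnt τ T η X i j : ℝ)) / K with ha
  have hcntT : ∀ X i j, (cnt τ T η X i j : ℝ) ≤ (T : ℝ) := by
    intro X i j
    exact_mod_cast (cnt_le τ T η X i j).trans (Nat.div_le_self T (τ X))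
  have hanonneg : ∀ X i K, 0 ≤ a X i K := by
    intro X i K
    exact div_nonneg (Finset.sum_nonneg fun j _ => by positivity) (Nat.cast_nonneg K)
  have haT : ∀ X i K, a X i K ≤ (T : ℝ) := by
    intro X i K
    rcases Nat.eq_zero_or_pos K with h | h
    · simpa [ha, h] using (Nat.cast_nonneg T : (0:ℝ) ≤ T)
    · have hK : (0:ℝ) < K := by exact_mod_cast h
      simp only [ha]
      rw [div_le_iff₀ hK]
      calc ∑ j ∈ Finset.range K, (cnt τ T η X i j : ℝ)
          ≤ ∑ j ∈ Finset.range K, (T:ℝ) := Finset.sum_le_sum fun j _ => hcntT X i j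
        _ = K * T := by rw [Finset.sum_const, Finset.card_range, nsmul_eq_mul]
        _ = T * K := mul_comm _ _
  have hlim : ∀ X i, ∃ L ∈ Set.Icc (0:ℝ) T, Filter.Tendsto (a X i) U (nhds L) := by
    intro X i
    have hmem : ↑(Ultrafilter.map (a X i) U) ≤ Filter.principal (Set.Icc (0:ℝ) T) := by
      rw [Ultrafilter.coe_map, Filter.le_principal_iff, Filter.mem_map]
      exact Filter.univ_mem' fun K => ⟨hanonneg X i K, haT X i K⟩
    obtain ⟨L, hL, hle⟩ := (isCompact_Icc (a := (0:ℝ)) (b := (T:ℝ))).ultrafilter_le_nhds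
      _ hmem
    exact ⟨L, hL, by rwa [Filter.Tendsto, ← Ultrafilter.coe_map]⟩
  choose L hLmem hLtend using hlim
  refine ⟨L, ?_, ?_, ?_⟩
  · intro X
    have heq : ∀ K : ℕ, ∑ i ∈ Finset.Icc 1 (τ X), a X i K * r X i
        = (∑ j ∈ Finset.range K, frameReward τ T r η X j) / K := by
      intro K
      simp only [ha]
      simp_rw [div_mul_eq_mul_div, ← Finset.sum_div, Finset.sum_mul]
      congr 1
      rw [Finset.sum_comm]
      exact Finset.sum_congr rfl fun j _ => (frameReward_eq τ T r η X j).symm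
    have htend : Filter.Tendsto (fun K => ∑ i ∈ Finset.Icc 1 (τ X), a X i K * r X i) U
        (nhds (∑ i ∈ Finset.Icc 1 (τ X), L X i * r X i)) :=
      tendsto_finset_sum _ fun i _ => (hLtend X i).mul_const _
    have hC : 0 ≤ ∑ i ∈ Finset.Icc 1 (τ X), (T:ℝ) * r X i :=
      Finset.sum_nonneg fun i hi => mul_nonneg (Nat.cast_nonneg T) (hr_nonneg X i hi)
    have hsle : ∀ K : ℕ, (∑ j ∈ Finset.range K, frameReward τ T r η X j) / K
        ≤ ∑ i ∈ Finset.Icc 1 (τ X), (T:ℝ) * r X i := by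
      intro K
      rcases Nat.eq_zero_or_pos K with h | h
      · simpa [h] using hC
      · have hK : (0:ℝ) < K := by exact_mod_cast h
        rw [div_le_iff₀ hK]
        have hfr : ∀ j, frameReward τ T r η X j
            ≤ ∑ i ∈ Finset.Icc 1 (τ X), (T:ℝ) * r X i := by
          intro j
          rw [frameReward_eq τ T r η X j]
          exact Finset.sum_le_sum fun i hi =>
            mul_le_mul_of_nonneg_right (hcntT X i j) (hr_nonneg X i hi)
        calc ∑ j ∈ Finset.range K, frameReward τ T r η X j
            ≤ ∑ j ∈ Finset.range K, (∑ i ∈ Finset.Icc 1 (τ X), (T:ℝ) * r X i) :=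
              Finset.sum_le_sum fun j _ => hfr j
          _ = K * (∑ i ∈ Finset.Icc 1 (τ X), (T:ℝ) * r X i) := by
              rw [Finset.sum_const, Finset.card_range, nsmul_eq_mul]
          _ = (∑ i ∈ Finset.Icc 1 (τ X), (T:ℝ) * r X i) * K := mul_comm _ _
    have hs0 : ∀ K : ℕ, (0:ℝ) ≤ (∑ j ∈ Finset.range K, frameReward τ T r η X j) / K := by
      intro K
      apply div_nonneg _ (Nat.cast_nonneg K)
      refine Finset.sum_nonneg fun j _ => ?_
      rw [frameReward_eq τ T r η X j]
      exact Finset.sum_nonneg fun i hi =>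
        mul_nonneg (Nat.cast_nonneg _) (hr_nonneg X i hi)
    have hbdd : Filter.IsBoundedUnder (· ≥ ·) Filter.atTop
        (fun K : ℕ => (∑ j ∈ Finset.range K, frameReward τ T r η X j) / K) :=
      Filter.isBoundedUnder_of ⟨0, fun K => hs0 K⟩
    refine le_of_forall_sub_le fun ε hε => ?_
    have h1 : qstar X - ε < avgReward τ T r η X := by have := hη X; linarith
    unfold avgReward at h1
    have h2 : ∀ᶠ K : ℕ in Filter.atTop,
        qstar X - ε < (∑ j ∈ Finset.range K, frameReward τ T r η X j) / K :=
      Filter.eventually_lt_of_lt_liminf h1 hbdd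
    have h3 : ∀ᶠ K : ℕ in (U : Filter ℕ),
        qstar X - ε ≤ ∑ i ∈ Finset.Icc 1 (τ X), a X i K * r X i :=
      (h2.filter_mono hUle).mono fun K hK => by rw [heq K]; exact hK.le
    exact ge_of_tendsto htend h3
  · intro X i hi
    refine ⟨(hLmem X i).1, ?_⟩
    have hev : ∀ᶠ K : ℕ in (U : Filter ℕ), a X i K ≤ (T:ℝ) / (τ X : ℝ) := by
      refine ((Filter.eventually_ge_atTop 1).filter_mono hUle).mono fun K hK => ?_
      have hKpos : (0:ℝ) < K := by exact_mod_cast hK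
      simp only [ha]
      rw [div_le_iff₀ hKpos]
      have h1 : ∀ j, (cnt τ T η X i j : ℝ) ≤ (T:ℝ) / (τ X : ℝ) := by
        intro j
        calc (cnt τ T η X i j : ℝ) ≤ ((T / τ X : ℕ) : ℝ) := by
              exact_mod_cast cnt_le τ T η X i j
          _ ≤ (T:ℝ) / (τ X : ℝ) := Nat.cast_div_le
      calc ∑ j ∈ Finset.range K, (cnt τ T η X i j : ℝ)
          ≤ ∑ j ∈ Finset.range K, ((T:ℝ) / (τ X : ℝ)) :=
            Finset.sum_le_sum fun j _ => h1 j
        _ = K * ((T:ℝ) / (τ X : ℝ)) := by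
            rw [Finset.sum_const, Finset.card_range, nsmul_eq_mul]
        _ = (T:ℝ) / (τ X : ℝ) * K := mul_comm _ _
    exact le_of_tendsto (hLtend X i) hev
  · have htend : Filter.Tendsto
        (fun K => ∑ X : S, ∑ i ∈ Finset.Icc 1 (τ X), a X i K) U
        (nhds (∑ X : S, ∑ i ∈ Finset.Icc 1 (τ X), L X i)) :=
      tendsto_finset_sum _ fun X _ => tendsto_finset_sum _ fun i _ => hLtend X i
    have hev : ∀ᶠ K : ℕ in (U : Filter ℕ),
        ∑ X : S, ∑ i ∈ Finset.Icc 1 (τ X), a X i K ≤ (T:ℝ) := by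
      refine ((Filter.eventually_ge_atTop 1).filter_mono hUle).mono fun K hK => ?_
      have hKpos : (0:ℝ) < K := by exact_mod_cast hK
      simp only [ha]
      simp_rw [← Finset.sum_div]
      rw [div_le_iff₀ hKpos]
      have hsw : ∑ X : S, ∑ i ∈ Finset.Icc 1 (τ X), ∑ j ∈ Finset.range K,
            (cnt τ T η X i j : ℝ)
          = ∑ j ∈ Finset.range K, ∑ X : S, ∑ i ∈ Finset.Icc 1 (τ X),
            (cnt τ T η X i j : ℝ) :=
        calc ∑ X : S, ∑ i ∈ Finset.Icc 1 (τ X), ∑ j ∈ Finset.range K,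
              (cnt τ T η X i j : ℝ)
            = ∑ X : S, ∑ j ∈ Finset.range K, ∑ i ∈ Finset.Icc 1 (τ X),
              (cnt τ T η X i j : ℝ) :=
              Finset.sum_congr rfl fun X _ => Finset.sum_comm
          _ = _ := Finset.sum_comm
      rw [hsw]
      calc ∑ j ∈ Finset.range K, ∑ X : S, ∑ i ∈ Finset.Icc 1 (τ X), (cnt τ T η X i j : ℝ)
          ≤ ∑ j ∈ Finset.range K, (T:ℝ) := by
            refine Finset.sum_le_sum fun j _ => ?_
            exact_mod_cast total_cnt_le τ T η j hτ hdvd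
        _ = K * T := by rw [Finset.sum_const, Finset.card_range, nsmul_eq_mul]
        _ = T * K := mul_comm _ _
    exact le_of_tendsto htend hev
end

section
/- For every subset R of the rows of H there exists a partition R = R₁ ∪ R₂ into two disjoint sets such that for every column j, Σ_{i∈R₁} h_{i,j} − Σ_{i∈R₂} h_{i,j} ∈ {−1, 0, 1}; that is, H satisfies the Ghouila–Houri condition for total unimodularity. -/
/-- The `(2N+1) × N` matrix `H` from the feasibility analysis (0-indexed):
row `0` is all ones, and for each column `j`, row `2j+1` has a `1` and row
`2j+2` has a `-1` in column `j`; all other entries are `0`.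
(In the paper's 1-based indexing: `h_{1,j} = 1`, `h_{2j,j} = 1`,
`h_{2j+1,j} = -1`.) -/
def paperMatrixH (N : ℕ) : Matrix (Fin (2 * N + 1)) (Fin N) ℤ :=
  fun i j =>
    if (i : ℕ) = 0 then 1
    else if (i : ℕ) = 2 * (j : ℕ) + 1 then 1
    else if (i : ℕ) = 2 * (j : ℕ) + 2 then -1
    else 0

/-- Theorem 2 application.  The matrix `H` satisfies the
Ghouila–Houri condition: every subset `R` of its rows can be partitioned into
two disjoint sets `R₁ ∪ R₂ = R` such that in every column the difference of
the two partial row-sums lies in `{-1, 0, 1}`. -/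
theorem paperMatrixH_ghouilaHouri (N : ℕ) (hN : 0 < N) :
    ∀ R : Finset (Fin (2 * N + 1)),
      ∃ R₁ R₂ : Finset (Fin (2 * N + 1)),
        Disjoint R₁ R₂ ∧ R₁ ∪ R₂ = R ∧
        ∀ j : Fin N,
          (∑ i ∈ R₁, paperMatrixH N i j) - (∑ i ∈ R₂, paperMatrixH N i j)
            ∈ ({-1, 0, 1} : Set ℤ) := by
  classical
  intro R
  set p : Fin (2 * N + 1) → Prop :=
    fun i => (i : ℕ) % 2 = 1 ∨ ((i : ℕ) ≠ 0 ∧ ∃ k ∈ R, (k : ℕ) + 1 = (i : ℕ)) with hp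
  refine ⟨R.filter p, R.filter (fun i => ¬ p i),
    Finset.disjoint_filter_filter_not R R p, Finset.filter_union_filter_not_eq p R, ?_⟩
  intro j
  have hj := j.isLt
  set a0 : Fin (2 * N + 1) := ⟨0, by omega⟩ with ha0
  set a1 : Fin (2 * N + 1) := ⟨2 * (j : ℕ) + 1, by omega⟩ with ha1
  set a2 : Fin (2 * N + 1) := ⟨2 * (j : ℕ) + 2, by omega⟩ with ha2
  have hsum : ∀ S : Finset (Fin (2 * N + 1)),
      (∑ i ∈ S, paperMatrixH N i j) =
        (if a0 ∈ S then (1 : ℤ) else 0) + (if a1 ∈ S then 1 else 0)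
          - (if a2 ∈ S then 1 else 0) := by
    intro S
    have hent : ∀ i ∈ S, paperMatrixH N i j =
        (if i = a0 then (1 : ℤ) else 0) + (if i = a1 then 1 else 0)
          - (if i = a2 then 1 else 0) := by
      intro i _
      rcases i with ⟨i, hi⟩
      simp only [paperMatrixH, ha0, ha1, ha2, Fin.mk.injEq]
      split_ifs <;> omega
    rw [Finset.sum_congr rfl hent]
    simp [Finset.sum_add_distrib, Finset.sum_sub_distrib, Finset.sum_ite_eq']
  have hpa0 : ¬ p a0 := by
    simp only [hp, ha0]
    push_neg
    exact ⟨by omega, fun h => absurd rfl h⟩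
  have hpa1 : p a1 := by
    simp only [hp, ha1]
    left
    omega
  have hpa2 : p a2 ↔ a1 ∈ R := by
    constructor
    · rintro (h | ⟨-, k, hk, hk2⟩)
      · simp only [ha2] at h; omega
      · have : k = a1 := by
          apply Fin.ext
          simp only [ha1]
          simp only [ha2] at hk2
          omega
        rwa [this] at hk
    · intro h
      exact Or.inr ⟨by simp only [ha2]; omega, a1, h, by simp only [ha1, ha2]⟩
  rw [hsum, hsum]
  simp only [Finset.mem_filter, hpa0, hpa1, hpa2]
  by_cases h0 : a0 ∈ R <;> by_cases h1 : a1 ∈ R <;> by_cases h2 : a2 ∈ R <;>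
    simp [h0, h1, h2, Set.mem_insert_iff]
end

section
/- Let n_X^i (for X ∈ S and 1 ≤ i ≤ τ_X) be nonnegative integers with n_X^i ≤ T/τ_X for all X and i, and Σ_{X∈S} Σ_{i=1}^{τ_X} n_X^i ≤ T. For each task X and each integer t, define d_X(t) = Σ_{i=1}^{τ_X} #{k ∈ ℕ : k < n_X^i and T − kτ_X ≤ t}, i.e., the number of marked deadlines of X that are at most t when the i-th execution of each job of X is assigned the deadlines T, T−τ_X, …, T−(n_X^i−1)τ_X. Then Σ_{X∈S} d_X(t) ≤ t for every integer t with 1 ≤ t ≤ T. -/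
/-- The number of marked deadlines of task `X` that are `≤ t`, when for each
`i` the `i`-th execution of the jobs of `X` is assigned the `n_X^i` deadlines
`T, T − τ_X, …, T − (n_X^i − 1)·τ_X`. -/
def deadlineCount {S : Type*} (τ : S → ℕ) (T : ℕ) (n : S → ℕ → ℕ)
    (X : S) (t : ℕ) : ℕ :=
  ∑ i ∈ Finset.Icc 1 (τ X),
    ((Finset.range (n X i)).filter (fun k => T - k * τ X ≤ t)).card

/-- Key per-execution estimate: `T · count ≤ n · t`. -/
lemma key_count_le (τ T t n : ℕ) (hτ : 0 < τ) (hn : n ≤ T / τ) :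
    T * ((Finset.range n).filter (fun k => T - k * τ ≤ t)).card ≤ n * t := by
  set F := (Finset.range n).filter (fun k => T - k * τ ≤ t) with hF
  rcases F.eq_empty_or_nonempty with h | h
  · simp [h]
  · have hnτ : n * τ ≤ T := (Nat.le_div_iff_mul_le hτ).mp hn
    set m := F.min' h with hm
    have hmF : m ∈ F := F.min'_mem h
    have hmn : m < n := Finset.mem_range.mp (Finset.mem_filter.mp hmF).1
    have hmt : T ≤ t + m * τ := by
      have := (Finset.mem_filter.mp hmF).2
      omega
    have hsub : F ⊆ Finset.Ico m n := by
      intro k hk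
      exact Finset.mem_Ico.mpr ⟨F.min'_le k hk, Finset.mem_range.mp
        (Finset.mem_filter.mp hk).1⟩
    have hcard : F.card ≤ n - m := by
      simpa using Finset.card_le_card hsub
    set c := F.card with hc
    have hmc : m + c ≤ n := by omega
    have hcτ : c * τ ≤ t := by nlinarith
    nlinarith

/-- Eq. (6) of the paper.  If the nonnegative integers
`n_X^i` satisfy `n_X^i ≤ T/τ_X` and `Σ_X Σ_i n_X^i ≤ T`, then for every
`1 ≤ t ≤ T` the total number of marked deadlines not exceeding `t` is at
most `t`. -/
theorem deadlineCount_le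
    {S : Type*} [Fintype S] [Nonempty S]
    (τ : S → ℕ) (hτ : ∀ X, 0 < τ X)
    (T : ℕ) (hT : T = Finset.univ.lcm τ)
    (n : S → ℕ → ℕ)
    (hn_le : ∀ X, ∀ i ∈ Finset.Icc 1 (τ X), n X i ≤ T / τ X)
    (hn_sum : ∑ X : S, ∑ i ∈ Finset.Icc 1 (τ X), n X i ≤ T) :
    ∀ t : ℕ, 1 ≤ t → t ≤ T → ∑ X : S, deadlineCount τ T n X t ≤ t := by
  intro t ht1 htT
  have hT0 : 0 < T := lt_of_lt_of_le ht1 htT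
  have hmul : T * ∑ X : S, deadlineCount τ T n X t ≤ T * t := by
    rw [Finset.mul_sum]
    calc ∑ X : S, T * deadlineCount τ T n X t
        ≤ ∑ X : S, (∑ i ∈ Finset.Icc 1 (τ X), n X i) * t := by
          apply Finset.sum_le_sum
          intro X _
          unfold deadlineCount
          rw [Finset.mul_sum, Finset.sum_mul]
          apply Finset.sum_le_sum
          intro i hi
          exact key_count_le (τ X) T t (n X i) (hτ X) (hn_le X i hi)
      _ = (∑ X : S, ∑ i ∈ Finset.Icc 1 (τ X), n X i) * t := by
          rw [Finset.sum_mul]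
      _ ≤ T * t := Nat.mul_le_mul_right t hn_sum
  exact Nat.le_of_mul_le_mul_left hmul hT0
end

section
/- Almost surely, D(k)/k → 0 as k → ∞. -/
open MeasureTheory ProbabilityTheory Filter

private 
lemma debt_det (a : ℕ → ℕ) (ha : StrictMono a) (ha0 : a 0 = 0) {m : ℝ}
    (hlim : Tendsto (fun n : ℕ => (a n : ℝ) / (n : ℝ)) atTop (nhds m))
    {c : ℝ} (hc : 0 < c) (D : ℕ → ℝ) (hpos : ∀ k, 0 ≤ D k)
    (hincr : ∀ k, D (k + 1) ≤ D k + c) (hz : ∀ n, D (a n) = 0) :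
    Tendsto (fun k : ℕ => D k / (k : ℝ)) atTop (nhds 0) := by
  have haj : ∀ j, j ≤ a j := fun j => ha.le_apply
  set N : ℕ → ℕ := fun k => Nat.findGreatest (fun n => a n ≤ k) k with hNdef
  have hN1 : ∀ k, a (N k) ≤ k := fun k =>
    Nat.findGreatest_spec (P := fun n => a n ≤ k) (Nat.zero_le k) (by simp [ha0])
  have hN2 : ∀ k, k < a (N k + 1) := by
    intro k
    by_cases h : N k + 1 ≤ k
    · have h3 : ¬ a (N k + 1) ≤ k := Nat.findGreatest_is_greatest (P := fun n => a n ≤ k)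
        (Nat.lt_succ_self (N k)) h
      exact Nat.lt_of_not_le h3
    · have := haj (N k + 1); omega
  have hNk : ∀ k, N k ≤ k := fun k => le_trans (haj (N k)) (hN1 k)
  have hNtop : Tendsto N atTop atTop := by
    refine tendsto_atTop_atTop.2 fun j => ⟨a j, fun k hk => ?_⟩
    exact Nat.le_findGreatest (le_trans (haj j) hk) hk
  have hbound : ∀ n j, D (a n + j) ≤ c * j := by
    intro n j
    induction j with
    | zero => simp [hz n]
    | succ j ih =>
        have h1 : D (a n + (j + 1)) ≤ D (a n + j) + c := hincr _
        push_cast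
        push_cast at ih
        linarith
  have hDk : ∀ k, D k ≤ c * ((a (N k + 1) : ℝ) - a (N k)) := by
    intro k
    have h1 := hN1 k; have h2 := hN2 k
    have hk' : k = a (N k) + (k - a (N k)) := by omega
    calc D k = D (a (N k) + (k - a (N k))) := by rw [← hk']
      _ ≤ c * ((k - a (N k) : ℕ) : ℝ) := hbound _ _
      _ ≤ c * ((a (N k + 1) : ℝ) - a (N k)) := by
          apply mul_le_mul_of_nonneg_left _ hc.le
          rw [Nat.cast_sub h1]
          have : (k : ℝ) < a (N k + 1) := by exact_mod_cast h2
          linarith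
  -- limit of the gap sequence
  have hg : Tendsto (fun n : ℕ => c * (((a (n + 1) : ℝ) - a n) / n)) atTop (nhds 0) := by
    have ha' : Tendsto (fun n : ℕ => (a (n + 1) : ℝ) / ((n : ℝ) + 1)) atTop (nhds m) := by
      have := hlim.comp (tendsto_add_atTop_nat 1)
      refine this.congr fun n => ?_
      simp only [Function.comp]
      push_cast
      ring
    have hr : Tendsto (fun n : ℕ => ((n : ℝ) + 1) / n) atTop (nhds 1) := by
      have h0 : Tendsto (fun n : ℕ => 1 + 1 / (n : ℝ)) atTop (nhds 1) := by
        simpa using (tendsto_const_nhds : Tendsto (fun _ : ℕ => (1:ℝ)) atTop (nhds 1)).add tendsto_one_div_atTop_nhds_zero_nat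
      refine h0.congr' ?_
      filter_upwards [eventually_ge_atTop 1] with n hn
      have hn' : (n : ℝ) ≠ 0 := by positivity
      field_simp
    have h1 : Tendsto (fun n : ℕ => (a (n + 1) : ℝ) / n) atTop (nhds m) := by
      have := ha'.mul hr
      rw [mul_one] at this
      refine this.congr' ?_
      filter_upwards [eventually_ge_atTop 1] with n hn
      have hn' : (n : ℝ) ≠ 0 := by positivity
      have hn1 : (n : ℝ) + 1 ≠ 0 := by positivity
      field_simp
    have hsub : Tendsto (fun n : ℕ => (a (n + 1) : ℝ) / n - (a n : ℝ) / n) atTop (nhds 0) := by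
      simpa using h1.sub hlim
    have := hsub.const_mul c
    rw [mul_zero] at this
    refine this.congr fun n => ?_
    rw [div_sub_div_same]
  have key : Tendsto (fun k : ℕ => c * (((a (N k + 1) : ℝ) - a (N k)) / (N k))) atTop (nhds 0) :=
    hg.comp hNtop
  apply squeeze_zero' (g := fun k : ℕ => c * (((a (N k + 1) : ℝ) - a (N k)) / (N k)))
    ?_ ?_ key
  · filter_upwards [eventually_ge_atTop 1] with k hk
    exact div_nonneg (hpos k) (by positivity)
  · filter_upwards [eventually_ge_atTop (max (a 1) 1)] with k hk
    have hk1 : 1 ≤ k := le_trans (le_max_right _ _) hk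
    have hNk1 : 1 ≤ N k := Nat.le_findGreatest (le_trans (haj 1) (le_trans (le_max_left _ _) hk))
      (le_trans (le_max_left _ _) hk)
    have hNpos : (0 : ℝ) < N k := by exact_mod_cast hNk1
    have hkNk : (N k : ℝ) ≤ k := by exact_mod_cast hNk k
    have hnum : (0 : ℝ) ≤ (a (N k + 1) : ℝ) - a (N k) := by
      have := ha (Nat.lt_succ_self (N k))
      have : (a (N k) : ℝ) ≤ a (N k + 1) := by exact_mod_cast this.le
      linarith
    have hkpos : (0 : ℝ) < k := by exact_mod_cast hk1
    calc D k / k ≤ (c * ((a (N k + 1) : ℝ) - a (N k))) / k := by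
          gcongr
          exact hDk k
      _ ≤ c * (((a (N k + 1) : ℝ) - a (N k)) / (N k)) := by
          rw [mul_div_assoc]
          apply mul_le_mul_of_nonneg_left _ hc.le
          exact div_le_div_of_nonneg_left hnum hNpos hkNk


/-- key step of Lemma 3.  Let `(K_n)` be a strictly
increasing sequence of `ℕ`-valued random variables with `K_0 = 0` whose
increments are independent, identically distributed and integrable, let
`c > 0`, and let `(D k)` be nonnegative random variables with
`D (k+1) ≤ D k + c` and `D (K n) = 0` for every `n`.  Then almost surely
`D k / k → 0` as `k → ∞`. -/
theorem debt_sublinear_of_renewals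
    {Ω : Type*} [MeasurableSpace Ω] (μ : MeasureTheory.Measure Ω)
    [IsProbabilityMeasure μ]
    (K : ℕ → Ω → ℕ)
    (hK_mono : ∀ ω, StrictMono (fun n => K n ω))
    (hK0 : ∀ ω, K 0 ω = 0)
    (hK_indep : ProbabilityTheory.iIndepFun
      (fun n ω => K (n + 1) ω - K n ω) μ)
    (hK_ident : ∀ n : ℕ, ProbabilityTheory.IdentDistrib
      (fun ω => K (n + 1) ω - K n ω) (fun ω => K 1 ω - K 0 ω) μ μ)
    (hK_int : MeasureTheory.Integrable
      (fun ω => ((K 1 ω - K 0 ω : ℕ) : ℝ)) μ)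
    (c : ℝ) (hc : 0 < c)
    (D : ℕ → Ω → ℝ)
    (hD_nonneg : ∀ k ω, 0 ≤ D k ω)
    (hD_incr : ∀ k ω, D (k + 1) ω ≤ D k ω + c)
    (hD_zero : ∀ n ω, D (K n ω) ω = 0) :
    ∀ᵐ ω ∂μ, Filter.Tendsto (fun k : ℕ => D k ω / (k : ℝ))
      Filter.atTop (nhds 0) := by

  set X : ℕ → Ω → ℝ := fun n ω => ((K (n + 1) ω - K n ω : ℕ) : ℝ) with hX
  have hX0 : X 0 = fun ω => ((K 1 ω - K 0 ω : ℕ) : ℝ) := rfl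
  have hint : Integrable (X 0) μ := by rw [hX0]; exact hK_int
  have hindep : Pairwise (Function.onFun (IndepFun · · μ) X) := by
    intro i j hij
    have := hK_indep.indepFun hij
    exact this.comp (measurable_from_top (f := (Nat.cast : ℕ → ℝ)))
      (measurable_from_top (f := (Nat.cast : ℕ → ℝ)))
  have hident : ∀ i, IdentDistrib (X i) (X 0) μ μ := fun i =>
    (hK_ident i).comp (measurable_from_top (f := (Nat.cast : ℕ → ℝ)))
  have hsll := strong_law_ae_real X hint hindep hident
  filter_upwards [hsll] with ω hω
  have hlimK : Tendsto (fun n : ℕ => ((K n ω : ℝ)) / (n : ℝ)) atTop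
      (nhds (μ[X 0])) := by
    refine hω.congr fun n => ?_
    congr 1
    have hcast : ∀ i, ((K (i + 1) ω - K i ω : ℕ) : ℝ) = (K (i + 1) ω : ℝ) - K i ω := fun i => by
      rw [Nat.cast_sub ((hK_mono ω).monotone (Nat.le_succ i))]
    simp only [hX, hcast]
    rw [Finset.sum_range_sub (fun i => (K i ω : ℝ))]
    simp [hK0 ω]
  exact debt_det (fun n => K n ω) (hK_mono ω) (hK0 ω) hlimK hc (fun k => D k ω)
    (fun k => hD_nonneg k ω) (fun k => hD_incr k ω) (fun n => hD_zero n ω)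
end

section
/- Suppose there exist constants ε > 0 and B ≥ 0 such that 0 ≤ q̃_X(k) ≤ B for all X ∈ S and k ≥ 1, and such that for every k ≥ 0, Σ_{X∈S} q̃_X(k+1) d_X(k) ≥ (1+ε) Σ_{X∈S} q*_X d_X(k). Then the debts are uniformly bounded — there exists a constant C with d_X(k) ≤ C for all X ∈ S and k ≥ 0 — and consequently liminf_{k→∞} (1/k) Σ_{j=1}^k q̃_X(j) ≥ q*_X for every X ∈ S. -/
/-- deterministic content of Theorem 6/7.  If the
per-frame rewards are uniformly bounded and in every frame the policy earns
debt-weighted reward at least `(1+ε)` times the debt-weighted requirement,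
then the debts stay uniformly bounded and every task achieves its minimum
average reward requirement. -/
theorem debts_bounded_and_fulfilled
    {S : Type*} [Fintype S] [Nonempty S]
    (qstar : S → ℝ) (hqstar : ∀ X, 0 < qstar X)
    (qt : S → ℕ → ℝ)
    (d : S → ℕ → ℝ)
    (hd0 : ∀ X, d X 0 = 0)
    (hd : ∀ X, ∀ k : ℕ, 1 ≤ k →
      d X k = max (d X (k - 1) + qstar X - qt X k) 0)
    (ε B : ℝ) (hε : 0 < ε) (hB : 0 ≤ B)
    (hqt_bdd : ∀ X, ∀ k : ℕ, 1 ≤ k → 0 ≤ qt X k ∧ qt X k ≤ B)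
    (hdrift : ∀ k : ℕ,
      (1 + ε) * ∑ X : S, qstar X * d X k ≤ ∑ X : S, qt X (k + 1) * d X k) :
    (∃ C : ℝ, ∀ X : S, ∀ k : ℕ, d X k ≤ C) ∧
    (∀ X : S, qstar X ≤ Filter.liminf
      (fun k : ℕ => (∑ j ∈ Finset.Icc 1 k, qt X j) / (k : ℝ))
      Filter.atTop) := by
  classical
  -- nonnegativity of debts
  have hd_nonneg : ∀ X k, 0 ≤ d X k := by
    intro X k
    cases k with
    | zero => simp [hd0]
    | succ n =>
      rw [hd X (n + 1) (by omega)]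
      exact le_max_right _ _
  -- one-step lower bound
  have hd_step : ∀ X k, d X k + qstar X - qt X (k + 1) ≤ d X (k + 1) := by
    intro X k
    have := hd X (k + 1) (by omega)
    simp only [Nat.add_sub_cancel] at this
    rw [this]
    exact le_max_left _ _
  -- minimum requirement
  obtain ⟨X0, -, hX0⟩ :=
    Finset.exists_min_image (Finset.univ : Finset S) qstar ⟨Classical.arbitrary S, Finset.mem_univ _⟩
  set m : ℝ := qstar X0 with hm_def
  have hm : 0 < m := hqstar X0
  have hm_le : ∀ X : S, m ≤ qstar X := fun X => hX0 X (Finset.mem_univ X)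
  -- Lyapunov function
  set V : ℕ → ℝ := fun k => ∑ X : S, (d X k) ^ 2 with hV
  set M : ℝ := ∑ X : S, (qstar X + B) ^ 2 with hM
  have hM0 : 0 ≤ M := Finset.sum_nonneg fun X _ => sq_nonneg _
  set R : ℝ := M / (2 * ε * m) with hR
  have hR0 : 0 ≤ R := div_nonneg hM0 (by positivity)
  -- key drift inequality
  have key : ∀ k, V (k + 1) ≤
      V k + 2 * ((∑ X : S, qstar X * d X k) - ∑ X : S, qt X (k + 1) * d X k) + M := by
    intro k
    have hterm : ∀ X : S, (d X (k + 1)) ^ 2 ≤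
        (d X k) ^ 2 + 2 * (qstar X * d X k - qt X (k + 1) * d X k) + (qstar X + B) ^ 2 := by
      intro X
      have hmax := hd X (k + 1) (by omega)
      simp only [Nat.add_sub_cancel] at hmax
      have h2 : (d X (k + 1)) ^ 2 ≤ (d X k + qstar X - qt X (k + 1)) ^ 2 := by
        set a : ℝ := d X k + qstar X - qt X (k + 1) with ha
        rw [hmax]
        rcases le_total a 0 with h | h
        · rw [max_eq_right h]; simpa using sq_nonneg a
        · rw [max_eq_left h]
      have hq := hqt_bdd X (k + 1) (by omega)
      have h3 : (qstar X - qt X (k + 1)) ^ 2 ≤ (qstar X + B) ^ 2 := by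
        apply sq_le_sq'
        · linarith [(hqstar X).le, hq.2]
        · linarith [hq.1]
      nlinarith [h2, h3]
    have heq : V k + 2 * ((∑ X : S, qstar X * d X k) - ∑ X : S, qt X (k + 1) * d X k) + M =
        ∑ X : S, ((d X k) ^ 2 + 2 * (qstar X * d X k - qt X (k + 1) * d X k)
          + (qstar X + B) ^ 2) := by
      simp [hV, hM, Finset.sum_add_distrib, ← Finset.sum_sub_distrib, Finset.mul_sum]
    rw [heq]
    exact Finset.sum_le_sum fun X _ => hterm X
  have hsum_nonneg : ∀ k, 0 ≤ ∑ X : S, qstar X * d X k := fun k =>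
    Finset.sum_nonneg fun X _ => mul_nonneg (hqstar X).le (hd_nonneg X k)
  -- V is uniformly bounded
  have hVbdd : ∀ k, V k ≤ R ^ 2 + M := by
    intro k
    induction k with
    | zero => simp [hV, hd0]; positivity
    | succ n ih =>
      have hdrift' : (∑ X : S, qstar X * d X n) - ∑ X : S, qt X (n + 1) * d X n ≤
          -(ε * ∑ X : S, qstar X * d X n) := by
        have := hdrift n
        nlinarith
      rcases le_total (V n) (R ^ 2) with h | h
      · have := key n
        nlinarith [hsum_nonneg n, hε.le]
      · -- large V : sum of debts exceeds R
        have h1 : V n ≤ (∑ X : S, d X n) ^ 2 :=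
          Finset.sum_sq_le_sq_sum_of_nonneg fun X _ => hd_nonneg X n
        have hsd : 0 ≤ ∑ X : S, d X n := Finset.sum_nonneg fun X _ => hd_nonneg X n
        have h2 : R ≤ ∑ X : S, d X n := by
          nlinarith
        have h3 : m * R ≤ ∑ X : S, qstar X * d X n := by
          calc m * R ≤ m * ∑ X : S, d X n := by
                exact mul_le_mul_of_nonneg_left h2 hm.le
            _ = ∑ X : S, m * d X n := by rw [Finset.mul_sum]
            _ ≤ ∑ X : S, qstar X * d X n :=
                Finset.sum_le_sum fun X _ =>
                  mul_le_mul_of_nonneg_right (hm_le X) (hd_nonneg X n)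
        have hmR : M ≤ 2 * ε * m * R := by
          rw [hR]
          field_simp
          exact le_rfl
        have := key n
        nlinarith
  -- bound on debts
  set C : ℝ := Real.sqrt (R ^ 2 + M) with hC
  have hCd : ∀ X k, d X k ≤ C := by
    intro X k
    have h1 : (d X k) ^ 2 ≤ V k := by
      have : ∀ Y : S, Y ∈ Finset.univ → 0 ≤ (d Y k) ^ 2 := fun Y _ => sq_nonneg _
      exact Finset.single_le_sum this (Finset.mem_univ X)
    have h2 : (d X k) ^ 2 ≤ R ^ 2 + M := h1.trans (hVbdd k)
    have := Real.sqrt_le_sqrt h2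
    calc d X k = Real.sqrt ((d X k) ^ 2) := by
          rw [Real.sqrt_sq (hd_nonneg X k)]
      _ ≤ C := Real.sqrt_le_sqrt h2
  have hC0 : 0 ≤ C := Real.sqrt_nonneg _
  refine ⟨⟨C, hCd⟩, ?_⟩
  -- second part: liminf
  intro X
  -- partial sums lower bound
  have hpartial : ∀ k : ℕ, (k : ℝ) * qstar X - d X k ≤ ∑ j ∈ Finset.Icc 1 k, qt X j := by
    intro k
    induction k with
    | zero => simp [hd0]
    | succ n ih =>
      rw [Finset.sum_Icc_succ_top (by omega : 1 ≤ n + 1)]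
      have := hd_step X n
      push_cast
      linarith
  have hg_nonneg : ∀ k : ℕ, 0 ≤ (∑ j ∈ Finset.Icc 1 k, qt X j) / (k : ℝ) := by
    intro k
    apply div_nonneg _ (Nat.cast_nonneg k)
    exact Finset.sum_nonneg fun j hj => (hqt_bdd X j (Finset.mem_Icc.mp hj).1).1
  -- the auxiliary sequence q* - C/k tends to q*
  have htend : Filter.Tendsto (fun k : ℕ => qstar X - C / (k : ℝ)) Filter.atTop
      (nhds (qstar X)) := by
    have h1 : Filter.Tendsto (fun k : ℕ => C / (k : ℝ)) Filter.atTop (nhds 0) :=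
      Filter.Tendsto.div_atTop tendsto_const_nhds tendsto_natCast_atTop_atTop
    simpa using tendsto_const_nhds.sub h1
  have hev : ∀ᶠ k : ℕ in Filter.atTop,
      qstar X - C / (k : ℝ) ≤ (∑ j ∈ Finset.Icc 1 k, qt X j) / (k : ℝ) := by
    filter_upwards [Filter.eventually_ge_atTop 1] with k hk
    have hk0 : (0 : ℝ) < (k : ℝ) := by exact_mod_cast hk
    have h1 : (k : ℝ) * qstar X - C ≤ ∑ j ∈ Finset.Icc 1 k, qt X j :=
      le_trans (by linarith [hCd X k]) (hpartial k)
    rw [sub_le_iff_le_add, ← add_div, le_div_iff₀ hk0]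
    calc (qstar X) * (k : ℝ) = (k : ℝ) * qstar X - C + C := by ring
      _ ≤ (∑ j ∈ Finset.Icc 1 k, qt X j) + C := by linarith
  calc qstar X
      = Filter.liminf (fun k : ℕ => qstar X - C / (k : ℝ)) Filter.atTop :=
        (htend.liminf_eq).symm
    _ ≤ Filter.liminf (fun k : ℕ => (∑ j ∈ Finset.Icc 1 k, qt X j) / (k : ℝ))
        Filter.atTop := by
        have hvB : ∀ k : ℕ, (∑ j ∈ Finset.Icc 1 k, qt X j) / (k : ℝ) ≤ B := by
          intro k
          rcases Nat.eq_zero_or_pos k with rfl | hk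
          · simpa using hB
          have hk0 : (0 : ℝ) < (k : ℝ) := by exact_mod_cast hk
          rw [div_le_iff₀ hk0]
          calc ∑ j ∈ Finset.Icc 1 k, qt X j ≤ ∑ j ∈ Finset.Icc 1 k, B :=
                Finset.sum_le_sum fun j hj => (hqt_bdd X j (Finset.mem_Icc.mp hj).1).2
            _ = B * (k : ℝ) := by simp [Nat.card_Icc, mul_comm]
        exact Filter.liminf_le_liminf hev htend.isBoundedUnder_ge
          ((Filter.isBoundedUnder_of ⟨B, hvB⟩).isCoboundedUnder_ge)
end

section
/- Every greedy allocation g has maximum value: for every allocation n (i.e., every n : S → ℕ with n_X ≤ τ for all X and Σ_{X∈S} n_X ≤ τ), Σ_{X∈S} d_X Σ_{i=1}^{g_X} r_X^i ≥ Σ_{X∈S} d_X Σ_{i=1}^{n_X} r_X^i. (Hence, when all tasks have the same period, the Greedy Maximizer maximizes the debt-weighted frame reward Σ_X d_X q̃_X(k) in every frame, and is therefore feasibility optimal.) -/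
/-- The number of times task `X` has been chosen among the first `k` greedy
steps `pick 0, …, pick (k-1)`. -/
def greedyCount {S : Type*} [DecidableEq S] (pick : ℕ → S) (k : ℕ) (X : S) : ℕ :=
  ((Finset.range k).filter (fun j => pick j = X)).card

/-- Theorem 8, equal periods.  Every greedy allocation has
maximum debt-weighted value among all allocations `n : S → ℕ` with `n_X ≤ τ`
and `Σ_X n_X ≤ τ`.  A greedy allocation `g` is described by the sequence
`pick` of tasks chosen at the `τ` steps: at each step `k < τ` the chosen task
`pick k` has current count `< τ` and maximizes `d_Y · r_Y^{(count Y)+1}` among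
all tasks with current count `< τ`, and `g_X` is the number of steps at which
`X` was chosen. -/
theorem greedy_allocation_optimal
    {S : Type*} [Fintype S] [Nonempty S] [DecidableEq S]
    (τ : ℕ) (hτ : 0 < τ)
    (r : S → ℕ → ℝ)
    (hr_nonneg : ∀ X, ∀ i ∈ Finset.Icc 1 τ, 0 ≤ r X i)
    (hr_anti : ∀ X, ∀ i, 1 ≤ i → i + 1 ≤ τ → r X (i + 1) ≤ r X i)
    (d : S → ℝ) (hd : ∀ X, 0 ≤ d X)
    (pick : ℕ → S) (g : S → ℕ)
    (hpick : ∀ k : ℕ, k < τ →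
      greedyCount pick k (pick k) < τ ∧
      ∀ Z : S, greedyCount pick k Z < τ →
        d Z * r Z (greedyCount pick k Z + 1) ≤
          d (pick k) * r (pick k) (greedyCount pick k (pick k) + 1))
    (hg : ∀ X, g X = greedyCount pick τ X) :
    ∀ n : S → ℕ, (∀ X, n X ≤ τ) → (∑ X : S, n X ≤ τ) →
      ∑ X : S, d X * ∑ i ∈ Finset.Icc 1 (n X), r X i ≤
        ∑ X : S, d X * ∑ i ∈ Finset.Icc 1 (g X), r X i := by
  classical
  intro n hn hsum
  -- basic facts about greedyCount
  have hcsucc : ∀ k (X : S), greedyCount pick (k+1) X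
      = greedyCount pick k X + (if pick k = X then 1 else 0) := by
    intro k X
    simp only [greedyCount, Finset.range_add_one, Finset.filter_insert]
    by_cases h : pick k = X
    · rw [if_pos h, if_pos h, Finset.card_insert_of_notMem (by simp)]
    · rw [if_neg h, if_neg h, add_zero]
  have hcmono : ∀ (X : S) (k l : ℕ), k ≤ l →
      greedyCount pick k X ≤ greedyCount pick l X := by
    intro X k l hkl
    exact Finset.card_le_card
      (Finset.filter_subset_filter _ (Finset.range_subset_range.2 hkl))
  have hcle : ∀ k (X : S), greedyCount pick k X ≤ k := by
    intro k X
    exact le_trans (Finset.card_filter_le _ _) (Finset.card_range k).le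
  have hsumc : ∀ k, ∑ X : S, greedyCount pick k X = k := by
    intro k
    have := Finset.card_eq_sum_card_fiberwise
      (s := Finset.range k) (t := Finset.univ) (f := pick)
      (fun x _ => Finset.mem_univ _)
    simpa [greedyCount] using this.symm
  have hgle : ∀ X : S, g X ≤ τ := by
    intro X; rw [hg]; exact hcle τ X
  have hgsum : ∑ X : S, g X = τ := by
    rw [Finset.sum_congr rfl (fun X _ => hg X), hsumc]
  -- chain of the antitone reward
  have hrchain : ∀ (X : S) (a b : ℕ), 1 ≤ a → a ≤ b → b ≤ τ → r X b ≤ r X a := by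
    intro X a b h1 hab
    induction b, hab using Nat.le_induction with
    | base => intro _; exact le_refl _
    | succ b hb IH =>
      intro hbτ
      exact le_trans (hr_anti X b (h1.trans hb) hbτ) (IH (by omega))
  -- marginal values of greedy steps
  set V : ℕ → ℝ :=
    fun k => d (pick k) * r (pick k) (greedyCount pick k (pick k) + 1) with hV
  have hVmono : ∀ k, k + 1 < τ → V (k+1) ≤ V k := by
    intro k hk
    obtain ⟨hb, _⟩ := hpick (k+1) hk
    set Z := pick (k+1) with hZ
    have hab : greedyCount pick (k+1) Z
        = greedyCount pick k Z + (if pick k = Z then 1 else 0) := hcsucc k Z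
    have haZ : greedyCount pick k Z < τ := by
      have := hcmono Z k (k+1) (Nat.le_succ k)
      omega
    have h2 := (hpick k (by omega)).2 Z haZ
    refine le_trans ?_ h2
    simp only [hV]
    by_cases hp : pick k = Z
    · rw [if_pos hp] at hab
      have : r Z (greedyCount pick (k+1) Z + 1) ≤ r Z (greedyCount pick k Z + 1) := by
        rw [hab]
        exact hr_anti Z (greedyCount pick k Z + 1) (by omega) (by omega)
      exact mul_le_mul_of_nonneg_left this (hd Z)
    · rw [if_neg hp, add_zero] at hab
      rw [hab]
  have hVge : ∀ k, k < τ → V (τ-1) ≤ V k := by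
    intro k hk
    have key : ∀ j, k + j ≤ τ - 1 → V (k + j) ≤ V k := by
      intro j
      induction j with
      | zero => intro _; simp
      | succ j IH =>
        intro hj
        have h1 : k + j + 1 < τ := by omega
        have := hVmono (k + j) h1
        rw [show k + (j+1) = k + j + 1 by ring]
        exact le_trans this (IH (by omega))
    have := key (τ - 1 - k) (by omega)
    rwa [show k + (τ-1-k) = τ-1 by omega] at this
  have hVnn : 0 ≤ V (τ-1) := by
    simp only [hV]
    refine mul_nonneg (hd _) (hr_nonneg _ _ ?_)
    rw [Finset.mem_Icc]
    have := hcle (τ-1) (pick (τ-1))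
    omega
  -- each marginal reward with index ≤ g X is realized at some greedy step
  have hexists : ∀ K (X : S) (i : ℕ), i < greedyCount pick K X →
      ∃ k, k < K ∧ pick k = X ∧ greedyCount pick k X = i := by
    intro K
    induction K with
    | zero => intro X i h; simp [greedyCount] at h
    | succ K IH =>
      intro X i h
      by_cases h' : i < greedyCount pick K X
      · obtain ⟨k, hk, h1, h2⟩ := IH X i h'
        exact ⟨k, Nat.lt_succ_of_lt hk, h1, h2⟩
      · push_neg at h'
        rw [hcsucc] at h
        by_cases hp : pick K = X
        · rw [if_pos hp] at h
          exact ⟨K, Nat.lt_succ_self K, hp, by omega⟩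
        · rw [if_neg hp] at h; omega
  -- key comparison bounds
  have hXbound : ∀ (X : S) (i : ℕ), g X < i → i ≤ τ → d X * r X i ≤ V (τ-1) := by
    intro X i hgi hiτ
    have h1 : greedyCount pick (τ-1) X < τ := by
      have := hcle (τ-1) X; omega
    have h2 := (hpick (τ-1) (by omega)).2 X h1
    have h3 : greedyCount pick (τ-1) X + 1 ≤ i := by
      have h4 := hcmono X (τ-1) τ (by omega)
      have h5 := hg X
      omega
    have h6 : d X * r X i ≤ d X * r X (greedyCount pick (τ-1) X + 1) :=
      mul_le_mul_of_nonneg_left (hrchain X _ i (by omega) h3 hiτ) (hd X)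
    exact h6.trans h2
  have hVbound : ∀ (X : S) (i : ℕ), 0 < i → i ≤ g X → V (τ-1) ≤ d X * r X i := by
    intro X i h0 hig
    have hlt : i - 1 < greedyCount pick τ X := by
      have := hg X; omega
    obtain ⟨k, hkτ, hpk, hck⟩ := hexists τ X (i-1) hlt
    have hVk : V k = d X * r X i := by
      simp only [hV]

      rw [hpk, hck, Nat.sub_add_cancel h0]
    rw [← hVk]
    exact hVge k hkτ
  -- split the sums at m X = min (g X) (n X)
  set m : S → ℕ := fun X => min (g X) (n X) with hm
  have hmn : ∀ X, m X ≤ n X := fun X => min_le_right _ _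
  have hmg : ∀ X, m X ≤ g X := fun X => min_le_left _ _
  have hIcc : ∀ t : ℕ, Finset.Icc 1 t = Finset.Ioc 0 t := by
    intro t; ext x; simp [Finset.mem_Icc, Finset.mem_Ioc]; omega
  have hsplit : ∀ (t : ℕ) (X : S), m X ≤ t →
      ∑ i ∈ Finset.Icc 1 t, r X i
        = ∑ i ∈ Finset.Ioc 0 (m X), r X i + ∑ i ∈ Finset.Ioc (m X) t, r X i := by
    intro t X ht
    rw [hIcc, Finset.sum_Ioc_consecutive _ (Nat.zero_le _) ht]
  -- per-task excess bounds
  have exl : ∀ X : S, d X * ∑ i ∈ Finset.Ioc (m X) (n X), r X i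
      ≤ ((n X : ℝ) - (m X : ℝ)) * V (τ-1) := by
    intro X
    rw [Finset.mul_sum]
    have hb : ∀ i ∈ Finset.Ioc (m X) (n X), d X * r X i ≤ V (τ-1) := by
      intro i hi
      rw [Finset.mem_Ioc] at hi
      have hmX : m X = min (g X) (n X) := rfl
      have hgX : g X < i := by omega
      exact hXbound X i hgX (le_trans hi.2 (hn X))
    calc ∑ i ∈ Finset.Ioc (m X) (n X), d X * r X i
        ≤ (Finset.Ioc (m X) (n X)).card • V (τ-1) :=
          Finset.sum_le_card_nsmul _ _ _ hb
      _ = ((n X - m X : ℕ) : ℝ) * V (τ-1) := by rw [Nat.card_Ioc, nsmul_eq_mul]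
      _ = ((n X : ℝ) - (m X : ℝ)) * V (τ-1) := by rw [Nat.cast_sub (hmn X)]
  have exg : ∀ X : S, ((g X : ℝ) - (m X : ℝ)) * V (τ-1)
      ≤ d X * ∑ i ∈ Finset.Ioc (m X) (g X), r X i := by
    intro X
    rw [Finset.mul_sum]
    have hb : ∀ i ∈ Finset.Ioc (m X) (g X), V (τ-1) ≤ d X * r X i := by
      intro i hi
      rw [Finset.mem_Ioc] at hi
      exact hVbound X i (by omega) hi.2
    calc ((g X : ℝ) - (m X : ℝ)) * V (τ-1)
        = ((g X - m X : ℕ) : ℝ) * V (τ-1) := by rw [Nat.cast_sub (hmg X)]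
      _ = (Finset.Ioc (m X) (g X)).card • V (τ-1) := by rw [Nat.card_Ioc, nsmul_eq_mul]
      _ ≤ ∑ i ∈ Finset.Ioc (m X) (g X), d X * r X i :=
          Finset.card_nsmul_le_sum _ _ _ hb
  -- counting step
  have hmid : ∑ X : S, ((n X : ℝ) - (m X : ℝ)) * V (τ-1)
      ≤ ∑ X : S, ((g X : ℝ) - (m X : ℝ)) * V (τ-1) := by
    rw [← Finset.sum_mul, ← Finset.sum_mul]
    refine mul_le_mul_of_nonneg_right ?_ hVnn
    rw [Finset.sum_sub_distrib, Finset.sum_sub_distrib]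
    refine sub_le_sub_right ?_ _
    rw [← Nat.cast_sum, ← Nat.cast_sum, Nat.cast_le, hgsum]
    exact hsum
  have key : ∑ X : S, d X * ∑ i ∈ Finset.Ioc (m X) (n X), r X i
      ≤ ∑ X : S, d X * ∑ i ∈ Finset.Ioc (m X) (g X), r X i :=
    le_trans (Finset.sum_le_sum fun X _ => exl X)
      (le_trans hmid (Finset.sum_le_sum fun X _ => exg X))
  -- assemble
  calc ∑ X : S, d X * ∑ i ∈ Finset.Icc 1 (n X), r X i
      = ∑ X : S, (d X * ∑ i ∈ Finset.Ioc 0 (m X), r X i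
          + d X * ∑ i ∈ Finset.Ioc (m X) (n X), r X i) := by
        refine Finset.sum_congr rfl fun X _ => ?_
        rw [hsplit (n X) X (hmn X)]; ring
    _ = (∑ X : S, d X * ∑ i ∈ Finset.Ioc 0 (m X), r X i)
          + ∑ X : S, d X * ∑ i ∈ Finset.Ioc (m X) (n X), r X i :=
        Finset.sum_add_distrib
    _ ≤ (∑ X : S, d X * ∑ i ∈ Finset.Ioc 0 (m X), r X i)
          + ∑ X : S, d X * ∑ i ∈ Finset.Ioc (m X) (g X), r X i :=
        add_le_add_right key _
    _ = ∑ X : S, (d X * ∑ i ∈ Finset.Ioc 0 (m X), r X i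
          + d X * ∑ i ∈ Finset.Ioc (m X) (g X), r X i) :=
        Finset.sum_add_distrib.symm
    _ = ∑ X : S, d X * ∑ i ∈ Finset.Icc 1 (g X), r X i := by
        refine Finset.sum_congr rfl fun X _ => ?_
        rw [hsplit (g X) X (hmg X)]; ring
end

section
/- Suppose f = (f_X^i) satisfies the feasibility conditions: (1) q*_X ≤ Σ_{i=1}^{τ_X} f_X^i r_X^i for every X ∈ S; (2) 0 ≤ f_X^i ≤ T/τ_X for all X, i; and (3) Σ_{X∈S} Σ_{i=1}^{τ_X} f_X^i ≤ T. Let Y ∈ S and 1 ≤ j < k ≤ τ_Y be such that f_Y^j < T/τ_Y and f_Y^k > 0, and set δ = min(T/τ_Y − f_Y^j, f_Y^k). Then the vector f̂ defined by f̂_Y^j = f_Y^j + δ, f̂_Y^k = f_Y^k − δ, and f̂_X^i = f_X^i for all other pairs (X,i), also satisfies conditions (1), (2) and (3). -/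
/-- reward-transfer observation for the Feasibility
Checker.  If `f` satisfies the feasibility conditions (1)–(3) and
`f_Y^j < T/τ_Y`, `f_Y^k > 0` for some `j < k`, then transferring
`δ = min(T/τ_Y − f_Y^j, f_Y^k)` from index `k` to index `j` preserves the
three conditions. -/
theorem transfer_preserves_feasibility
    {S : Type*} [Fintype S] [Nonempty S] [DecidableEq S]
    (τ : S → ℕ) (hτ : ∀ X, 0 < τ X)
    (T : ℕ) (hT : T = Finset.univ.lcm τ)
    (r : S → ℕ → ℝ)
    (hr_nonneg : ∀ X, ∀ i ∈ Finset.Icc 1 (τ X), 0 ≤ r X i)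
    (hr_anti : ∀ X, ∀ i, 1 ≤ i → i + 1 ≤ τ X → r X (i + 1) ≤ r X i)
    (qstar : S → ℝ) (hqstar : ∀ X, 0 < qstar X)
    (f : S → ℕ → ℝ)
    (h1 : ∀ X, qstar X ≤ ∑ i ∈ Finset.Icc 1 (τ X), f X i * r X i)
    (h2 : ∀ X, ∀ i ∈ Finset.Icc 1 (τ X),
      0 ≤ f X i ∧ f X i ≤ (T : ℝ) / (τ X : ℝ))
    (h3 : ∑ X : S, ∑ i ∈ Finset.Icc 1 (τ X), f X i ≤ (T : ℝ))
    (Y : S) (j k : ℕ) (hj : 1 ≤ j) (hjk : j < k) (hk : k ≤ τ Y)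
    (hfj : f Y j < (T : ℝ) / (τ Y : ℝ)) (hfk : 0 < f Y k)
    (δ : ℝ) (hδ : δ = min ((T : ℝ) / (τ Y : ℝ) - f Y j) (f Y k))
    (fhat : S → ℕ → ℝ)
    (hfhat : ∀ X i, fhat X i =
      if X = Y ∧ i = j then f Y j + δ
      else if X = Y ∧ i = k then f Y k - δ
      else f X i) :
    (∀ X, qstar X ≤ ∑ i ∈ Finset.Icc 1 (τ X), fhat X i * r X i) ∧
    (∀ X, ∀ i ∈ Finset.Icc 1 (τ X),
      0 ≤ fhat X i ∧ fhat X i ≤ (T : ℝ) / (τ X : ℝ)) ∧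
    (∑ X : S, ∑ i ∈ Finset.Icc 1 (τ X), fhat X i ≤ (T : ℝ)) := by
  have hjτ : j ≤ τ Y := le_trans (le_of_lt hjk) hk
  have hjmem : j ∈ Finset.Icc 1 (τ Y) := Finset.mem_Icc.mpr ⟨hj, hjτ⟩
  have hkmem : k ∈ Finset.Icc 1 (τ Y) := Finset.mem_Icc.mpr ⟨le_trans hj (le_of_lt hjk), hk⟩
  have hjk' : j ≠ k := ne_of_lt hjk
  have hδ0 : 0 ≤ δ := by
    rw [hδ]; exact le_min (by linarith) (le_of_lt hfk)
  have hδj : δ ≤ (T : ℝ) / (τ Y : ℝ) - f Y j := by rw [hδ]; exact min_le_left _ _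
  have hδk : δ ≤ f Y k := by rw [hδ]; exact min_le_right _ _
  -- key sum identity
  have key : ∀ g : ℕ → ℝ,
      ∑ i ∈ Finset.Icc 1 (τ Y), fhat Y i * g i =
      (∑ i ∈ Finset.Icc 1 (τ Y), f Y i * g i) + δ * g j - δ * g k := by
    intro g
    have : ∀ i ∈ Finset.Icc 1 (τ Y),
        fhat Y i * g i = f Y i * g i +
          ((if i = j then δ * g j else 0) - (if i = k then δ * g k else 0)) := by
      intro i _
      rw [hfhat]
      by_cases hij : i = j
      · subst hij
        simp [hjk', if_neg]
        ring
      · by_cases hik : i = k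
        · subst hik
          simp [hij]
          ring
        · simp [hij, hik]
    rw [Finset.sum_congr rfl this, Finset.sum_add_distrib, Finset.sum_sub_distrib,
      Finset.sum_ite_eq' _ j, Finset.sum_ite_eq' _ k, if_pos hjmem, if_pos hkmem]
    ring
  -- monotonicity of r
  have rmono : ∀ a b : ℕ, 1 ≤ a → a ≤ b → b ≤ τ Y → r Y b ≤ r Y a := by
    intro a b ha hab hb
    induction b with
    | zero => omega
    | succ n ih =>
      rcases Nat.lt_or_ge a (n + 1) with h | h
      · have hn : a ≤ n := by omega
        have h1n : 1 ≤ n := le_trans ha hn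
        exact le_trans (hr_anti Y n h1n hb) (ih hn (by omega))
      · have : a = n + 1 := by omega
        subst this; exact le_refl _
  refine ⟨?_, ?_, ?_⟩
  · -- condition 1
    intro X
    by_cases hXY : X = Y
    · subst hXY
      rw [key]
      have hrjk : r X k ≤ r X j := rmono j k hj (le_of_lt hjk) hk
      have := h1 X
      nlinarith
    · have : ∀ i ∈ Finset.Icc 1 (τ X), fhat X i * r X i = f X i * r X i := by
        intro i _; rw [hfhat]; simp [hXY]
      rw [Finset.sum_congr rfl this]; exact h1 X
  · -- condition 2
    intro X i hi
    rw [hfhat]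
    by_cases hc1 : X = Y ∧ i = j
    · obtain ⟨hXY, hij⟩ := hc1
      have h0 := (h2 Y j hjmem).1
      subst hXY; subst hij
      rw [if_pos ⟨rfl, rfl⟩]
      constructor <;> linarith
    · rw [if_neg hc1]
      by_cases hc2 : X = Y ∧ i = k
      · obtain ⟨hXY, hik⟩ := hc2
        have h0 := (h2 Y k hkmem).2
        subst hXY; subst hik
        rw [if_pos ⟨rfl, rfl⟩]
        constructor <;> linarith
      · rw [if_neg hc2]; exact h2 X i hi
  · -- condition 3
    have : ∀ X : S, ∑ i ∈ Finset.Icc 1 (τ X), fhat X i =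
        ∑ i ∈ Finset.Icc 1 (τ X), f X i := by
      intro X
      by_cases hXY : X = Y
      · subst hXY
        have := key (fun _ => 1)
        simpa using this
      · refine Finset.sum_congr rfl fun i _ => ?_
        rw [hfhat]; simp [hXY]
    rw [Finset.sum_congr rfl fun X _ => this X]
    exact h3
end

section
/- The water-filling vector f satisfies 0 ≤ f_i ≤ c for all i and Σ_{i=1}^m f_i r_i ≥ q*, and it minimizes the total time among all feasible vectors: for every h ∈ ℝ^m with 0 ≤ h_i ≤ c for all i and Σ_{i=1}^m h_i r_i ≥ q*, one has Σ_{i=1}^m f_i ≤ Σ_{i=1}^m h_i. -/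
/-- correctness of the water-filling step of the
Feasibility Checker.  Let `r_1 ≥ ⋯ ≥ r_m ≥ 0`, `c > 0`, and
`0 < q* ≤ c Σ_i r_i`.  The water-filling vector `f`, defined greedily with
residual requirements `q_1 = q*` and
`q_{i+1} = q_i − c·r_i` if `q_i > c·r_i`, else `q_{i+1} = 0`, with
`f_i = c` if `q_i > c·r_i`, `f_i = q_i / r_i` if `0 < q_i ≤ c·r_i`, and
`f_i = 0` if `q_i ≤ 0`, satisfies `0 ≤ f_i ≤ c` and `Σ_i f_i r_i ≥ q*`,
and minimizes `Σ_i f_i` among all such feasible vectors. -/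
theorem waterfilling_optimal
    (m : ℕ) (hm : 0 < m)
    (r : ℕ → ℝ)
    (hr_nonneg : ∀ i ∈ Finset.Icc 1 m, 0 ≤ r i)
    (hr_anti : ∀ i, 1 ≤ i → i + 1 ≤ m → r (i + 1) ≤ r i)
    (c : ℝ) (hc : 0 < c)
    (qstar : ℝ) (hq_pos : 0 < qstar)
    (hq_le : qstar ≤ c * ∑ i ∈ Finset.Icc 1 m, r i)
    (q : ℕ → ℝ) (f : ℕ → ℝ)
    (hq1 : q 1 = qstar)
    (hq_rec : ∀ i, 1 ≤ i →
      q (i + 1) = if c * r i < q i then q i - c * r i else 0)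
    (hf : ∀ i, 1 ≤ i →
      f i = if c * r i < q i then c else if 0 < q i then q i / r i else 0) :
    (∀ i ∈ Finset.Icc 1 m, 0 ≤ f i ∧ f i ≤ c) ∧
    (qstar ≤ ∑ i ∈ Finset.Icc 1 m, f i * r i) ∧
    (∀ h : ℕ → ℝ, (∀ i ∈ Finset.Icc 1 m, 0 ≤ h i ∧ h i ≤ c) →
      qstar ≤ ∑ i ∈ Finset.Icc 1 m, h i * r i →
      ∑ i ∈ Finset.Icc 1 m, f i ≤ ∑ i ∈ Finset.Icc 1 m, h i) := by
  classical
  -- q is nonnegative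
  have hq_nonneg : ∀ k, 1 ≤ k → 0 ≤ q k := by
    intro k hk
    induction k, hk using Nat.le_induction with
    | base => rw [hq1]; exact hq_pos.le
    | succ n hn ih =>
      rw [hq_rec n hn]
      split_ifs with hb
      · linarith
      · exact le_rfl
  -- r is antitone on [1, m]
  have hr_mono : ∀ i j, 1 ≤ i → i ≤ j → j ≤ m → r j ≤ r i := by
    intro i j hi hij hjm
    induction j, hij using Nat.le_induction with
    | base => exact le_rfl
    | succ n hn ih =>
      exact le_trans (hr_anti n (le_trans hi hn) hjm) (ih (by omega))
  -- once q hits ≤ 0 it stays ≤ 0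
  have hq_step0 : ∀ k, 1 ≤ k → k ≤ m → q k ≤ 0 → q (k + 1) = 0 := by
    intro k hk hkm hq0
    rw [hq_rec k hk]
    have hcr : 0 ≤ c * r k := mul_nonneg hc.le (hr_nonneg k (Finset.mem_Icc.mpr ⟨hk, hkm⟩))
    rw [if_neg (by linarith)]
  have hq_persist : ∀ i, 1 ≤ i → q i ≤ 0 → ∀ j, i ≤ j → j ≤ m + 1 → q j ≤ 0 := by
    intro i hi hqi j hij hjm
    induction j, hij using Nat.le_induction with
    | base => exact hqi
    | succ n hn ih =>
      have hnm : n ≤ m := by omega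
      have := hq_step0 n (le_trans hi hn) hnm (ih (by omega))
      linarith
  -- telescoping identity
  have hfr : ∀ i, 1 ≤ i → i ≤ m → f i * r i = q i - q (i + 1) := by
    intro i hi him
    have hri : 0 ≤ r i := hr_nonneg i (Finset.mem_Icc.mpr ⟨hi, him⟩)
    rw [hf i hi, hq_rec i hi]
    split_ifs with h1 h2
    · ring
    · have hr_pos : 0 < r i := by nlinarith
      field_simp
      ring
    · have h0 := hq_nonneg i hi
      push_neg at h2
      simp only [zero_mul, sub_zero]
      linarith
  have hsum_fr : ∑ i ∈ Finset.Icc 1 m, f i * r i = qstar - q (m + 1) := by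
    have e1 : ∑ i ∈ Finset.Icc 1 m, f i * r i = ∑ i ∈ Finset.Icc 1 m, (q i - q (i + 1)) := by
      refine Finset.sum_congr rfl (fun i hi => ?_)
      obtain ⟨h1, h2⟩ := Finset.mem_Icc.mp hi
      exact hfr i h1 h2
    have e2 : ∀ n : ℕ, ∑ i ∈ Finset.Icc 1 n, (q i - q (i + 1)) = q 1 - q (n + 1) := by
      intro n
      induction n with
      | zero => simp
      | succ k ih =>
        rw [Finset.sum_Icc_succ_top (by omega), ih]
        ring
    rw [e1, e2 m, hq1]
  -- upper bound on q
  have hq_upper : ∀ k, k ≤ m →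
      q (k + 1) ≤ qstar - c * ∑ i ∈ Finset.Icc 1 k, r i ∨ q (k + 1) ≤ 0 := by
    intro k
    induction k with
    | zero => intro _; left; simp [hq1]
    | succ n ih =>
      intro hnm
      have hsum : ∑ i ∈ Finset.Icc 1 (n + 1), r i
          = ∑ i ∈ Finset.Icc 1 n, r i + r (n + 1) := Finset.sum_Icc_succ_top (by omega) r
      rcases ih (by omega) with hle | hle
      · rw [hq_rec (n + 1) (by omega)]
        split_ifs with hb
        · left; rw [hsum, mul_add]; linarith
        · right; exact le_rfl
      · right
        exact hq_persist (n + 1) (by omega) hle (n + 2) (by omega) (by omega)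
  have hqm1_le : q (m + 1) ≤ 0 := by
    rcases hq_upper m le_rfl with hle | hle
    · linarith
    · exact hle
  have hqm1 : q (m + 1) = 0 := le_antisymm hqm1_le (hq_nonneg (m + 1) (by omega))
  have hsum_fr' : ∑ i ∈ Finset.Icc 1 m, f i * r i = qstar := by rw [hsum_fr, hqm1]; ring
  -- bounds on f
  have hbounds : ∀ i ∈ Finset.Icc 1 m, 0 ≤ f i ∧ f i ≤ c := by
    intro i hi
    obtain ⟨h1, h2⟩ := Finset.mem_Icc.mp hi
    have hri : 0 ≤ r i := hr_nonneg i hi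
    rw [hf i h1]
    split_ifs with hb hp
    · exact ⟨hc.le, le_rfl⟩
    · push_neg at hb
      have hr_pos : 0 < r i := by nlinarith
      exact ⟨div_nonneg hp.le hri, by rw [div_le_iff₀ hr_pos]; linarith⟩
    · exact ⟨le_rfl, hc.le⟩
  refine ⟨hbounds, le_of_eq hsum_fr'.symm, ?_⟩
  intro h hbd hfeas
  -- pivot index p: last index with q p > 0
  set p := Nat.findGreatest (fun k => 0 < q k) m with hpdef
  have hq1pos : 0 < q 1 := by rw [hq1]; exact hq_pos
  have hp1 : 1 ≤ p := Nat.le_findGreatest (P := fun k => 0 < q k) hm hq1pos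
  have hpm : p ≤ m := Nat.findGreatest_le m
  have hqp : 0 < q p := Nat.findGreatest_spec (P := fun k => 0 < q k) hm hq1pos
  have hgt0 : ∀ k, p < k → k ≤ m → q k ≤ 0 := by
    intro k hk hkm
    have := Nat.findGreatest_is_greatest (P := fun k => 0 < q k) hk hkm
    simpa using this
  have hqp1 : q (p + 1) ≤ 0 := by
    rcases eq_or_lt_of_le hpm with he | hlt
    · rw [he]; exact hqm1_le
    · exact hgt0 (p + 1) (by omega) (by omega)
  have hnb : ¬ c * r p < q p := by
    intro hb
    rw [hq_rec p hp1, if_pos hb] at hqp1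
    linarith
  push_neg at hnb
  have hrp_pos : 0 < r p := by nlinarith
  -- f i = c for i < p
  have hfull : ∀ i, 1 ≤ i → i < p → f i = c := by
    intro i hi hip
    have hqi1 : 0 < q (i + 1) := by
      by_contra hcon
      push_neg at hcon
      have := hq_persist (i + 1) (by omega) hcon p (by omega) (by omega)
      linarith
    have hb : c * r i < q i := by
      by_contra hb
      rw [hq_rec i hi, if_neg hb] at hqi1
      linarith
    rw [hf i hi, if_pos hb]
  -- f i = 0 for i > p
  have hzero : ∀ i, p < i → i ≤ m → f i = 0 := by
    intro i hip him
    have hqi : q i ≤ 0 := hgt0 i hip him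
    have hri : 0 ≤ r i := hr_nonneg i (Finset.mem_Icc.mpr ⟨by omega, him⟩)
    have hcr : 0 ≤ c * r i := mul_nonneg hc.le hri
    rw [hf i (by omega), if_neg (by linarith), if_neg (by linarith)]
  -- pointwise comparison against the pivot rate
  have key : ∀ i ∈ Finset.Icc 1 m, (h i - f i) * r i ≤ (h i - f i) * r p := by
    intro i hi
    obtain ⟨h1, h2⟩ := Finset.mem_Icc.mp hi
    rcases lt_trichotomy i p with hlt | heq | hgt
    · have hfi : f i = c := hfull i h1 hlt
      have hd : h i - f i ≤ 0 := by have := (hbd i hi).2; linarith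
      exact mul_le_mul_of_nonpos_left (hr_mono i p h1 hlt.le hpm) hd
    · rw [heq]
    · have hfi : f i = 0 := hzero i hgt h2
      have hd : 0 ≤ h i - f i := by have := (hbd i hi).1; linarith
      exact mul_le_mul_of_nonneg_left (hr_mono p i hp1 hgt.le h2) hd
  have hsum_le : ∑ i ∈ Finset.Icc 1 m, (h i - f i) * r i
      ≤ r p * ∑ i ∈ Finset.Icc 1 m, (h i - f i) := by
    rw [Finset.mul_sum]
    refine Finset.sum_le_sum (fun i hi => ?_)
    rw [mul_comm (r p)]
    exact key i hi
  have h0 : 0 ≤ ∑ i ∈ Finset.Icc 1 m, (h i - f i) * r i := by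
    have e : ∑ i ∈ Finset.Icc 1 m, (h i - f i) * r i
        = (∑ i ∈ Finset.Icc 1 m, h i * r i) - ∑ i ∈ Finset.Icc 1 m, f i * r i := by
      rw [← Finset.sum_sub_distrib]
      exact Finset.sum_congr rfl (fun i _ => by ring)
    rw [e, hsum_fr']
    linarith
  have hS : 0 ≤ ∑ i ∈ Finset.Icc 1 m, (h i - f i) := by nlinarith
  have e2 : ∑ i ∈ Finset.Icc 1 m, (h i - f i)
      = (∑ i ∈ Finset.Icc 1 m, h i) - ∑ i ∈ Finset.Icc 1 m, f i :=
    Finset.sum_sub_distrib _ _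
  linarith [e2 ▸ hS]
end
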